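/- arXiv:2003.12106 — 7 statements merged into one kernel-verified Lean document; each statement's English description precedes it below -/
import Mathlib

section
/- If the predicate Q is α-constructible using M and P ▷ Q ⊢ v : σ ⇝ Valid for a 0-order type σ, then v is σ-constructible using M. -/
/-!  Formalization of the core calculus and definitions from
"Data-Driven Inference of Representation Invariants". -/

namespace RepInv

/-- Types: base type β, the abstract type α, products, and functions. -/
inductive Ty : Type
  | base : Ty
  | abs : Ty
  | prod : Ty → Ty → Ty
  | arrow : Ty → Ty → Ty

/-- 0-order types: σ ::= β | α | σ×σ. -/
inductive Ty.IsZero : Ty → Prop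
  | base : Ty.IsZero .base
  | abs : Ty.IsZero .abs
  | prod {σ₁ σ₂ : Ty} : Ty.IsZero σ₁ → Ty.IsZero σ₂ → Ty.IsZero (.prod σ₁ σ₂)

/-- 1st-order types: τ ::= σ | σ→τ | τ×τ. -/
inductive Ty.IsFirst : Ty → Prop
  | zero {σ : Ty} : Ty.IsZero σ → Ty.IsFirst σ
  | arrow {σ₁ τ₂ : Ty} : Ty.IsZero σ₁ → Ty.IsFirst τ₂ → Ty.IsFirst (.arrow σ₁ τ₂)
  | prod {τ₁ τ₂ : Ty} : Ty.IsFirst τ₁ → Ty.IsFirst τ₂ → Ty.IsFirst (.prod τ₁ τ₂)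

/-- Substitution of the concrete type `τc` for the abstract type α: τ[α↦τc]. -/
def Ty.substAbs : Ty → Ty → Ty
  | .base, _ => .base
  | .abs, τc => τc
  | .prod τ₁ τ₂, τc => .prod (τ₁.substAbs τc) (τ₂.substAbs τc)
  | .arrow τ₁ τ₂, τc => .arrow (τ₁.substAbs τc) (τ₂.substAbs τc)

/-- A type is closed (concrete) iff it does not mention the abstract type α. -/
def Ty.Closed : Ty → Prop
  | .base => True
  | .abs => False
  | .prod τ₁ τ₂ => τ₁.Closed ∧ τ₂.Closed
  | .arrow τ₁ τ₂ => τ₁.Closed ∧ τ₂.Closed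

/-- Expressions (with de Bruijn indices): variables, base constants `w`,
pairs, lambdas, projections and applications. -/
inductive Exp : Type
  | var : Nat → Exp
  | const : Nat → Exp
  | pair : Exp → Exp → Exp
  | lam : Ty → Exp → Exp
  | proj : Bool → Exp → Exp
  | app : Exp → Exp → Exp

/-- Values v ::= w | (v₁,v₂) | λx:σ.e. -/
inductive Exp.IsValue : Exp → Prop
  | const {w : Nat} : Exp.IsValue (.const w)
  | pair {v₁ v₂ : Exp} : Exp.IsValue v₁ → Exp.IsValue v₂ → Exp.IsValue (.pair v₁ v₂)
  | lam {σ : Ty} {e : Exp} : Exp.IsValue (.lam σ e)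

/-- Substitution of a closed expression `s` for variable `k`. -/
def Exp.subst : Exp → Nat → Exp → Exp
  | .var n, k, s => if n = k then s else if k < n then .var (n - 1) else .var n
  | .const w, _, _ => .const w
  | .pair e₁ e₂, k, s => .pair (e₁.subst k s) (e₂.subst k s)
  | .lam σ e, k, s => .lam σ (e.subst (k + 1) s)
  | .proj b e, k, s => .proj b (e.subst k s)
  | .app e₁ e₂, k, s => .app (e₁.subst k s) (e₂.subst k s)

/-- The typing judgement Γ ⊢ e : τ. -/
inductive HasType : List Ty → Exp → Ty → Prop
  | var {Γ : List Ty} {n : Nat} {τ : Ty} : Γ[n]? = some τ → HasType Γ (.var n) τ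
  | const {Γ : List Ty} {w : Nat} : HasType Γ (.const w) .base
  | pair {Γ : List Ty} {e₁ e₂ : Exp} {τ₁ τ₂ : Ty} :
      HasType Γ e₁ τ₁ → HasType Γ e₂ τ₂ → HasType Γ (.pair e₁ e₂) (.prod τ₁ τ₂)
  | lam {Γ : List Ty} {σ τ : Ty} {e : Exp} :
      HasType (σ :: Γ) e τ → HasType Γ (.lam σ e) (.arrow σ τ)
  | projl {Γ : List Ty} {e : Exp} {τ₁ τ₂ : Ty} :
      HasType Γ e (.prod τ₁ τ₂) → HasType Γ (.proj false e) τ₁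
  | projr {Γ : List Ty} {e : Exp} {τ₁ τ₂ : Ty} :
      HasType Γ e (.prod τ₁ τ₂) → HasType Γ (.proj true e) τ₂
  | app {Γ : List Ty} {e₁ e₂ : Exp} {τ₁ τ₂ : Ty} :
      HasType Γ e₁ (.arrow τ₁ τ₂) → HasType Γ e₂ τ₁ → HasType Γ (.app e₁ e₂) τ₂

/-- Big-step call-by-value evaluation e ⇓ v. -/
inductive Eval : Exp → Exp → Prop
  | const {w : Nat} : Eval (.const w) (.const w)
  | lam {σ : Ty} {e : Exp} : Eval (.lam σ e) (.lam σ e)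
  | pair {e₁ e₂ v₁ v₂ : Exp} :
      Eval e₁ v₁ → Eval e₂ v₂ → Eval (.pair e₁ e₂) (.pair v₁ v₂)
  | projl {e v₁ v₂ : Exp} : Eval e (.pair v₁ v₂) → Eval (.proj false e) v₁
  | projr {e v₁ v₂ : Exp} : Eval e (.pair v₁ v₂) → Eval (.proj true e) v₂
  | app {e₁ e₂ e v₂ v : Exp} {σ : Ty} :
      Eval e₁ (.lam σ e) → Eval e₂ v₂ → Eval (e.subst 0 v₂) v → Eval (.app e₁ e₂) v

/-- Conditional inductiveness: `Cond τc τ P Q v` formalizes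
`P ▷ Q ⊢ v : τ ⇝ Valid`, where `P` and `Q` are predicates on values of the
concrete type `τc`.  It is defined by recursion on the (first-order) type τ:
(I-B) at β the value is a base constant; (I-A) at α the value is a closed
value of type τc satisfying Q; (I-Prod) products componentwise; (I-Fun) at
σ₁→τ₂ the value is well typed at the substituted type and maps any argument
related with the roles of P and Q swapped to a related result. -/
def Cond (τc : Ty) : Ty → (Exp → Prop) → (Exp → Prop) → Exp → Prop
  | .base, _, _, v => ∃ w, v = Exp.const w
  | .abs, _, Q, v => HasType [] v τc ∧ Q v
  | .prod τ₁ τ₂, P, Q, v =>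
      ∃ v₁ v₂, v = Exp.pair v₁ v₂ ∧ Cond τc τ₁ P Q v₁ ∧ Cond τc τ₂ P Q v₂
  | .arrow σ₁ τ₂, P, Q, v =>
      HasType [] v ((Ty.arrow σ₁ τ₂).substAbs τc) ∧
      ∀ v₁ v₂, Cond τc σ₁ Q P v₁ → Eval (.app v v₁) v₂ → Cond τc τ₂ P Q v₂

/-- `CollectV τc σ v S`: CollectV(σ, v) is defined and equals the set S. -/
inductive CollectV (τc : Ty) : Ty → Exp → Set Exp → Prop
  | base {w : Nat} : CollectV τc .base (.const w) ∅
  | abs {v : Exp} : HasType [] v τc → CollectV τc .abs v {v}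
  | prod {σ₁ σ₂ : Ty} {v₁ v₂ : Exp} {S₁ S₂ : Set Exp} :
      CollectV τc σ₁ v₁ S₁ → CollectV τc σ₂ v₂ S₂ →
      CollectV τc (.prod σ₁ σ₂) (.pair v₁ v₂) (S₁ ∪ S₂)

/-- The refutation relation: `Refute τc P Q v τ S V` formalizes
`P ▷ Q ⊢ v : τ ⇝ (S, V)`, producing counterexample witness sets S and V. -/
inductive Refute (τc : Ty) (P Q : Exp → Prop) : Exp → Ty → Set Exp → Set Exp → Prop
  | abs {v : Exp} : HasType [] v τc → ¬ Q v → Refute τc P Q v .abs ∅ {v}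
  | prodl {v₁ v₂ : Exp} {τ₁ τ₂ : Ty} {S V : Set Exp} :
      Refute τc P Q v₁ τ₁ S V → HasType [] v₂ (τ₂.substAbs τc) →
      Refute τc P Q (.pair v₁ v₂) (.prod τ₁ τ₂) S V
  | prodr {v₁ v₂ : Exp} {τ₁ τ₂ : Ty} {S V : Set Exp} :
      HasType [] v₁ (τ₁.substAbs τc) → Refute τc P Q v₂ τ₂ S V →
      Refute τc P Q (.pair v₁ v₂) (.prod τ₁ τ₂) S V
  | fn {v v₁ v₂ : Exp} {σ₁ τ₂ : Ty} {S V S₁ : Set Exp} :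
      HasType [] v ((Ty.arrow σ₁ τ₂).substAbs τc) →
      Cond τc σ₁ Q P v₁ → Eval (.app v v₁) v₂ →
      Refute τc P Q v₂ τ₂ S V → CollectV τc σ₁ v₁ S₁ →
      Refute τc P Q v (.arrow σ₁ τ₂) (S₁ ∪ S) V

/-- A module implementation M = ⟨τc, vm⟩ for the interface F = ∃α.τm:
a closed concrete type τc together with operations vm of type τm[α↦τc]. -/
structure Module where
  τc : Ty
  τm : Ty
  vm : Exp
  closed : τc.Closed
  first : τm.IsFirst
  wt : HasType [] vm (τm.substAbs τc)

/-- `v` is τ-constructible using M: there is a client f : ∀α. τm → τ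
(an expression typed with α held abstract) with f[τc] vm ⇓ v. -/
def Constructible (M : Module) (v : Exp) (τ : Ty) : Prop :=
  ∃ f : Exp, HasType [] f (.arrow M.τm τ) ∧ Eval (.app f M.vm) v

/-- A set is α-constructible iff each of its elements is. -/
def ConstructibleSet (M : Module) (S : Set Exp) : Prop :=
  ∀ v ∈ S, Constructible M v .abs

/-- A predicate is α-constructible iff every value satisfying it is. -/
def ConstructiblePred (M : Module) (p : Exp → Prop) : Prop :=
  ∀ v, p v → Constructible M v .abs

/-- A specification is modeled semantically by the predicate
`φ v` ≡ “φ[τc] vm v holds”, for a polymorphic φ : ∀α. τm → α → bool.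
A predicate p is sufficient for φ and M iff p v implies φ[τc] vm v
for all values v of type τc. -/
def Sufficient (M : Module) (φ : Exp → Prop) (p : Exp → Prop) : Prop :=
  ∀ v : Exp, HasType [] v M.τc → p v → φ v

/-- I is a sufficient representation invariant for M w.r.t. φ:
I is sufficient for φ and M, and I ▷ I ⊢ vm : τm ⇝ Valid. -/
def SuffRepInv (M : Module) (φ : Exp → Prop) (I : Exp → Prop) : Prop :=
  Sufficient M φ I ∧ Cond M.τc M.τm I I M.vm

/-- The set of closed values of a (concrete) type. -/
def ClosedVals (τc : Ty) : Set Exp := {v | v.IsValue ∧ HasType [] v τc}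

/-- Result of a verifier call: Valid, or a counterexample value. -/
inductive VResult : Type
  | valid : VResult
  | cex : Exp → VResult

/-- Result of a CondInductive call: Valid, or witness sets (S, V). -/
inductive CIResult : Type
  | valid : CIResult
  | cex : Set Exp → Set Exp → CIResult

/-- Result of ClosedPositives: Valid, or a set V of new positive examples. -/
inductive CPResult : Type
  | valid : CPResult
  | cex : Set Exp → CPResult

/-- Result of NoNegatives: Valid, or a set S of new negative examples. -/
inductive NNResult : Type
  | valid : NNResult
  | cex : Set Exp → NNResult

/-- Verify is sound: Verify P = Valid implies P v for all values v of type τc. -/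
def VerifySound (M : Module) (Vf : (Exp → Prop) → VResult) : Prop :=
  ∀ P : Exp → Prop, Vf P = .valid → ∀ v : Exp, HasType [] v M.τc → P v

/-- Verify is complete: Verify P = v implies v is a value of type τc with ¬ P v. -/
def VerifyComplete (M : Module) (Vf : (Exp → Prop) → VResult) : Prop :=
  ∀ (P : Exp → Prop) (v : Exp), Vf P = .cex v → HasType [] v M.τc ∧ ¬ P v

/-- Synth is sound: any returned predicate maps every element of V+ to true
and every element of V- to false. -/
def SynthSound (Sy : Set Exp → Set Exp → Option (Exp → Prop)) : Prop :=
  ∀ (Vp Vm : Set Exp) (P : Exp → Prop), Sy Vp Vm = some P →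
    (∀ v ∈ Vp, P v) ∧ (∀ v ∈ Vm, ¬ P v)

/-- Synth is complete: whenever a separating predicate exists, Synth returns
some predicate. -/
def SynthComplete (Sy : Set Exp → Set Exp → Option (Exp → Prop)) : Prop :=
  ∀ Vp Vm : Set Exp,
    (∃ P : Exp → Prop, (∀ v ∈ Vp, P v) ∧ (∀ v ∈ Vm, ¬ P v)) →
    ∃ P : Exp → Prop, Sy Vp Vm = some P

/-- CondInductive P Q returns the result R such that P ▷ Q ⊢ vm : τm ⇝ R. -/
def CICorrect (M : Module) (CI : (Exp → Prop) → (Exp → Prop) → CIResult) : Prop :=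
  ∀ P Q : Exp → Prop,
    (CI P Q = .valid → Cond M.τc M.τm P Q M.vm) ∧
    (∀ S V : Set Exp, CI P Q = .cex S V → Refute M.τc P Q M.vm M.τm S V)

/-- ClosedPositives V+ I: Valid if CondInductive V+ I = Valid, and
CounterExample V if CondInductive V+ I = (S, V). -/
def ClosedPositives (CI : (Exp → Prop) → (Exp → Prop) → CIResult)
    (Vp : Set Exp) (I : Exp → Prop) : CPResult :=
  match CI (fun v => v ∈ Vp) I with
  | .valid => .valid
  | .cex _ V => .cex V

/-- NoNegatives I: first Verify the sufficiency claim for I; on a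
counterexample v return CounterExample {v}; otherwise if
CondInductive I I = Valid return Valid, and if CondInductive I I = (S, V)
return CounterExample S. -/
def NoNegatives (φ : Exp → Prop) (Vf : (Exp → Prop) → VResult)
    (CI : (Exp → Prop) → (Exp → Prop) → CIResult) (I : Exp → Prop) : NNResult :=
  match Vf (fun v => I v → φ v) with
  | .cex v => .cex {v}
  | .valid =>
    match CI I I with
    | .valid => .valid
    | .cex S _ => .cex S

/-- Possible outcomes of the Hanoi algorithm. -/
inductive HanoiResult : Type
  | invariant : (Exp → Prop) → HanoiResult
  | cex : Set Exp → HanoiResult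
  | failure : HanoiResult

/-- Big-step semantics of the Hanoi algorithm: `HanoiRun φ Vf Sy CI V+ V- r`
holds iff the call Hanoi V+ V- terminates with result r. -/
inductive HanoiRun (φ : Exp → Prop) (Vf : (Exp → Prop) → VResult)
    (Sy : Set Exp → Set Exp → Option (Exp → Prop))
    (CI : (Exp → Prop) → (Exp → Prop) → CIResult) :
    Set Exp → Set Exp → HanoiResult → Prop
  | synthFail {Vp Vm : Set Exp} :
      Sy Vp Vm = none → HanoiRun φ Vf Sy CI Vp Vm .failure
  | weaken {Vp Vm P : Set Exp} {I : Exp → Prop} {r : HanoiResult} :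
      Sy Vp Vm = some I → ClosedPositives CI Vp I = .cex P →
      HanoiRun φ Vf Sy CI (Vp ∪ P) ∅ r →
      HanoiRun φ Vf Sy CI Vp Vm r
  | specCex {Vp Vm N : Set Exp} {I : Exp → Prop} :
      Sy Vp Vm = some I → ClosedPositives CI Vp I = .valid →
      NoNegatives φ Vf CI I = .cex N → N \ Vp = ∅ →
      HanoiRun φ Vf Sy CI Vp Vm (.cex N)
  | strengthen {Vp Vm N : Set Exp} {I : Exp → Prop} {r : HanoiResult} :
      Sy Vp Vm = some I → ClosedPositives CI Vp I = .valid →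
      NoNegatives φ Vf CI I = .cex N → N \ Vp ≠ ∅ →
      HanoiRun φ Vf Sy CI Vp (Vm ∪ (N \ Vp)) r →
      HanoiRun φ Vf Sy CI Vp Vm r
  | done {Vp Vm : Set Exp} {I : Exp → Prop} :
      Sy Vp Vm = some I → ClosedPositives CI Vp I = .valid →
      NoNegatives φ Vf CI I = .valid →
      HanoiRun φ Vf Sy CI Vp Vm (.invariant I)

/-- The rank function R(V+, V-) = (|τc| − |V+|, |τc| − |V-|). -/
noncomputable def rank (τc : Ty) (Vp Vm : Set Exp) : Nat × Nat :=
  ((ClosedVals τc).ncard - Vp.ncard, (ClosedVals τc).ncard - Vm.ncard)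


/-! Auxiliary development: closedness, substitution, weak normalization. -/

def ClosedUnder : Nat → Exp → Prop
  | k, .var n => n < k
  | _, .const _ => True
  | k, .pair e₁ e₂ => ClosedUnder k e₁ ∧ ClosedUnder k e₂
  | k, .lam _ e => ClosedUnder (k + 1) e
  | k, .proj _ e => ClosedUnder k e
  | k, .app e₁ e₂ => ClosedUnder k e₁ ∧ ClosedUnder k e₂

theorem closedUnder_mono {e : Exp} : ∀ {j k : Nat}, ClosedUnder j e → j ≤ k → ClosedUnder k e := by
  induction e with
  | var n => intro j k h hjk; simp only [ClosedUnder] at *; omega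
  | const w => intro j k _ _; trivial
  | pair e₁ e₂ ih₁ ih₂ => exact fun h hjk => ⟨ih₁ h.1 hjk, ih₂ h.2 hjk⟩
  | lam σ e ih => exact fun h hjk => ih h (by omega)
  | proj b e ih => exact fun h hjk => ih h hjk
  | app e₁ e₂ ih₁ ih₂ => exact fun h hjk => ⟨ih₁ h.1 hjk, ih₂ h.2 hjk⟩

theorem subst_of_closed {e : Exp} : ∀ {k j : Nat} {s : Exp},
    ClosedUnder k e → k ≤ j → e.subst j s = e := by
  induction e with
  | var n =>
      intro k j s h hkj
      simp only [ClosedUnder] at h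
      simp only [Exp.subst]
      rw [if_neg (by omega), if_neg (by omega)]
  | const w => intro _ _ _ _ _; rfl
  | pair e₁ e₂ ih₁ ih₂ =>
      intro k j s h hkj; simp only [Exp.subst, ih₁ h.1 hkj, ih₂ h.2 hkj]
  | lam σ e ih =>
      intro k j s h hkj; simp only [Exp.subst, ih h (by omega : k + 1 ≤ j + 1)]
  | proj b e ih => intro k j s h hkj; simp only [Exp.subst, ih h hkj]
  | app e₁ e₂ ih₁ ih₂ =>
      intro k j s h hkj; simp only [Exp.subst, ih₁ h.1 hkj, ih₂ h.2 hkj]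

theorem hasType_closedUnder {Γ : List Ty} {e : Exp} {τ : Ty}
    (h : HasType Γ e τ) : ClosedUnder Γ.length e := by
  induction h with
  | var h => simp only [ClosedUnder]; exact (List.getElem?_eq_some_iff.mp h).1
  | const => trivial
  | pair _ _ ih₁ ih₂ => exact ⟨ih₁, ih₂⟩
  | lam _ ih => exact ih
  | projl _ ih => exact ih
  | projr _ ih => exact ih
  | app _ _ ih₁ ih₂ => exact ⟨ih₁, ih₂⟩

theorem closedUnder_subst {e : Exp} : ∀ {j k : Nat} {v : Exp},
    ClosedUnder (j + 1) e → ClosedUnder 0 v → k ≤ j → ClosedUnder j (e.subst k v) := by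
  induction e with
  | var n =>
      intro j k v h hv hkj
      simp only [ClosedUnder] at h
      simp only [Exp.subst]
      split
      · exact closedUnder_mono hv (by omega)
      · split <;> simp only [ClosedUnder] <;> omega
  | const w => intro _ _ _ _ _ _; trivial
  | pair e₁ e₂ ih₁ ih₂ =>
      intro j k v h hv hkj; exact ⟨ih₁ h.1 hv hkj, ih₂ h.2 hv hkj⟩
  | lam σ e ih =>
      intro j k v h hv hkj; exact ih h hv (by omega)
  | proj b e ih => intro j k v h hv hkj; exact ih h hv hkj
  | app e₁ e₂ ih₁ ih₂ =>
      intro j k v h hv hkj; exact ⟨ih₁ h.1 hv hkj, ih₂ h.2 hv hkj⟩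

theorem subst_var_eq {n : Nat} {s : Exp} : (Exp.var n).subst n s = s := by
  simp [Exp.subst]

theorem subst_var_lt {n j : Nat} {s : Exp} (h : j < n) :
    (Exp.var n).subst j s = .var (n - 1) := by
  simp only [Exp.subst]
  rw [if_neg (by omega), if_pos h]

theorem subst_var_gt {n j : Nat} {s : Exp} (h : n < j) :
    (Exp.var n).subst j s = .var n := by
  simp only [Exp.subst]
  rw [if_neg (by omega), if_neg (by omega)]

theorem subst_swap {w v : Exp} (hw : ClosedUnder 0 w) (hv : ClosedUnder 0 v) :
    ∀ (e : Exp) (k : Nat), (e.subst (k + 1) w).subst k v = (e.subst k v).subst k w := by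
  intro e
  induction e with
  | var n =>
      intro k
      by_cases h1 : n = k + 1
      · subst h1
        rw [subst_var_eq, subst_of_closed hw (Nat.zero_le _),
          subst_var_lt (by omega : k < k + 1)]
        have : k + 1 - 1 = k := by omega
        rw [this, subst_var_eq]
      · by_cases h2 : n = k
        · have l1 : (Exp.var n).subst (k + 1) w = .var n := subst_var_gt (by omega)
          have l2 : (Exp.var n).subst k v = v := by rw [h2]; exact subst_var_eq
          rw [l1, l2, subst_of_closed hv (Nat.zero_le k)]
        · by_cases h3 : k + 1 < n
          · have l1 : (Exp.var n).subst (k + 1) w = .var (n - 1) := subst_var_lt h3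
            have l2 : (Exp.var (n - 1)).subst k v = .var (n - 1 - 1) :=
              subst_var_lt (by omega)
            have r1 : (Exp.var n).subst k v = .var (n - 1) := subst_var_lt (by omega)
            have r2 : (Exp.var (n - 1)).subst k w = .var (n - 1 - 1) :=
              subst_var_lt (by omega)
            rw [l1, l2, r1, r2]
          · have hn : n < k := by omega
            have l1 : (Exp.var n).subst (k + 1) w = .var n := subst_var_gt (by omega)
            have l2 : (Exp.var n).subst k v = .var n := subst_var_gt hn
            have r2 : (Exp.var n).subst k w = .var n := subst_var_gt hn
            rw [l1, l2, r2]
  | const => intro k; rfl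
  | pair e₁ e₂ ih₁ ih₂ => intro k; simp only [Exp.subst, ih₁ k, ih₂ k]
  | lam σ e ih => intro k; simp only [Exp.subst, ih (k + 1)]
  | proj b e ih => intro k; simp only [Exp.subst, ih k]
  | app e₁ e₂ ih₁ ih₂ => intro k; simp only [Exp.subst, ih₁ k, ih₂ k]

/-- Iterated substitution at a fixed index. -/
def msubst (k : Nat) : List Exp → Exp → Exp
  | [], e => e
  | v :: ρ, e => msubst k ρ (e.subst k v)

theorem msubst_const {k : Nat} {w : Nat} : ∀ ρ, msubst k ρ (.const w) = .const w := by
  intro ρ; induction ρ with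
  | nil => rfl
  | cons v ρ ih => simpa [msubst, Exp.subst] using ih

theorem msubst_pair {k : Nat} : ∀ (ρ : List Exp) (e₁ e₂ : Exp),
    msubst k ρ (.pair e₁ e₂) = .pair (msubst k ρ e₁) (msubst k ρ e₂) := by
  intro ρ; induction ρ with
  | nil => intro e₁ e₂; rfl
  | cons v ρ ih => intro e₁ e₂; simp [msubst, Exp.subst, ih]

theorem msubst_proj {k : Nat} {b : Bool} : ∀ (ρ : List Exp) (e : Exp),
    msubst k ρ (.proj b e) = .proj b (msubst k ρ e) := by
  intro ρ; induction ρ with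
  | nil => intro e; rfl
  | cons v ρ ih => intro e; simp [msubst, Exp.subst, ih]

theorem msubst_app {k : Nat} : ∀ (ρ : List Exp) (e₁ e₂ : Exp),
    msubst k ρ (.app e₁ e₂) = .app (msubst k ρ e₁) (msubst k ρ e₂) := by
  intro ρ; induction ρ with
  | nil => intro e₁ e₂; rfl
  | cons v ρ ih => intro e₁ e₂; simp [msubst, Exp.subst, ih]

theorem msubst_lam {k : Nat} {σ : Ty} : ∀ (ρ : List Exp) (e : Exp),
    msubst k ρ (.lam σ e) = .lam σ (msubst (k + 1) ρ e) := by
  intro ρ; induction ρ with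
  | nil => intro e; rfl
  | cons v ρ ih => intro e; simp [msubst, Exp.subst, ih]

theorem msubst_of_closed {k : Nat} {e : Exp} (he : ClosedUnder 0 e) :
    ∀ ρ, msubst k ρ e = e := by
  intro ρ; induction ρ with
  | nil => rfl
  | cons v ρ ih =>
      simp only [msubst, subst_of_closed he (Nat.zero_le k)]; exact ih

theorem msubst_var {u : Exp} : ∀ (ρ : List Exp) (n : Nat),
    (∀ w ∈ ρ, ClosedUnder 0 w) → ρ[n]? = some u → msubst 0 ρ (.var n) = u := by
  intro ρ
  induction ρ with
  | nil => intro n _ h; simp at h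
  | cons w ρ ih =>
      intro n hcl h
      cases n with
      | zero =>
          simp only [List.getElem?_cons_zero, Option.some.injEq] at h
          subst h
          simp only [msubst, subst_var_eq]
          exact msubst_of_closed (hcl _ (by simp)) ρ
      | succ n =>
          simp only [List.getElem?_cons_succ] at h
          have hv : (Exp.var (n + 1)).subst 0 w = Exp.var n := by
            rw [subst_var_lt (Nat.succ_pos n)]; norm_num
          simp only [msubst, hv]
          exact ih n (fun x hx => hcl x (List.mem_cons_of_mem _ hx)) h

theorem msubst_subst_comm {v : Exp} (hv : ClosedUnder 0 v) :
    ∀ (ρ : List Exp) (e : Exp) (k : Nat), (∀ w ∈ ρ, ClosedUnder 0 w) →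
      (msubst (k + 1) ρ e).subst k v = msubst k ρ (e.subst k v) := by
  intro ρ; induction ρ with
  | nil => intro e k _; rfl
  | cons w ρ ih =>
      intro e k hcl
      simp only [msubst]
      rw [ih _ k (fun x hx => hcl x (List.mem_cons_of_mem _ hx)),
        subst_swap (hcl w List.mem_cons_self) hv e k]

theorem msubst_closedUnder {k : Nat} :
    ∀ (ρ : List Exp) (e : Exp), ClosedUnder (k + ρ.length) e →
      (∀ w ∈ ρ, ClosedUnder 0 w) → ClosedUnder k (msubst k ρ e) := by
  intro ρ; induction ρ with
  | nil => intro e h _; exact h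
  | cons w ρ ih =>
      intro e h hcl
      simp only [msubst]
      apply ih _ _ (fun x hx => hcl x (List.mem_cons_of_mem _ hx))
      have : k + (w :: ρ).length = (k + ρ.length) + 1 := by simp; omega
      rw [this] at h
      exact closedUnder_subst h (hcl w List.mem_cons_self) (by omega)

/-- The unary logical relation used for weak normalization. -/
def SemV : Ty → Exp → Prop
  | .base, v => ∃ w, v = .const w
  | .abs, _ => False
  | .prod τ₁ τ₂, v => ∃ v₁ v₂, v = .pair v₁ v₂ ∧ SemV τ₁ v₁ ∧ SemV τ₂ v₂
  | .arrow τ₁ τ₂, v => ∃ σ b, v = .lam σ b ∧ ClosedUnder 1 b ∧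
      ∀ v₁, SemV τ₁ v₁ → ∃ v₂, Eval (b.subst 0 v₁) v₂ ∧ SemV τ₂ v₂

theorem semV_closed : ∀ {τ : Ty} {v : Exp}, SemV τ v → ClosedUnder 0 v := by
  intro τ
  induction τ with
  | base => rintro v ⟨w, rfl⟩; trivial
  | abs => intro v h; exact h.elim
  | prod τ₁ τ₂ ih₁ ih₂ => rintro v ⟨v₁, v₂, rfl, h₁, h₂⟩; exact ⟨ih₁ h₁, ih₂ h₂⟩
  | arrow τ₁ τ₂ ih₁ ih₂ => rintro v ⟨σ, b, rfl, hb, _⟩; exact hb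

theorem semV_eval : ∀ {τ : Ty} {v : Exp}, SemV τ v → Eval v v := by
  intro τ
  induction τ with
  | base => rintro v ⟨w, rfl⟩; exact .const
  | abs => intro v h; exact h.elim
  | prod τ₁ τ₂ ih₁ ih₂ => rintro v ⟨v₁, v₂, rfl, h₁, h₂⟩; exact .pair (ih₁ h₁) (ih₂ h₂)
  | arrow τ₁ τ₂ _ _ => rintro v ⟨σ, b, rfl, _, _⟩; exact .lam

theorem forall₂_getElem {Γ : List Ty} {ρ : List Exp} (h : List.Forall₂ SemV Γ ρ) :
    ∀ {n : Nat} {τ : Ty}, Γ[n]? = some τ → ∃ v, ρ[n]? = some v ∧ SemV τ v := by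
  induction h with
  | nil => intro n τ h; simp at h
  | @cons τ' v' Γ' ρ' h₁ _ ih =>
      intro n τ hn
      cases n with
      | zero =>
          simp only [List.getElem?_cons_zero, Option.some.injEq] at hn
          exact ⟨v', by simp, hn ▸ h₁⟩
      | succ n =>
          simp only [List.getElem?_cons_succ] at hn ⊢
          exact ih hn

theorem fundamental {Γ : List Ty} {e : Exp} {τ : Ty} (ht : HasType Γ e τ) :
    ∀ ρ : List Exp, List.Forall₂ SemV Γ ρ →
      ∃ v, Eval (msubst 0 ρ e) v ∧ SemV τ v := by
  induction ht with
  | @var Γ n τ h =>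
      intro ρ hρ
      obtain ⟨v, hv, hsem⟩ := forall₂_getElem hρ h
      have hcl : ∀ w ∈ ρ, ClosedUnder 0 w := by
        intro w hw
        obtain ⟨i, hi, rfl⟩ := List.getElem_of_mem hw
        have := hρ.length_eq
        have : ∃ τ', Γ[i]? = some τ' := by
          refine ⟨Γ[i], ?_⟩
          exact List.getElem?_eq_getElem (by omega)
        obtain ⟨τ', hτ'⟩ := this
        obtain ⟨v', hv', hsem'⟩ := forall₂_getElem hρ hτ'
        rw [List.getElem?_eq_getElem (by omega)] at hv'
        cases hv'
        exact semV_closed hsem'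
      rw [msubst_var ρ n hcl hv]
      exact ⟨v, semV_eval hsem, hsem⟩
  | @const Γ w =>
      intro ρ _
      rw [msubst_const]
      exact ⟨.const w, .const, ⟨w, rfl⟩⟩
  | @pair Γ e₁ e₂ τ₁ τ₂ _ _ ih₁ ih₂ =>
      intro ρ hρ
      obtain ⟨v₁, hv₁, hs₁⟩ := ih₁ ρ hρ
      obtain ⟨v₂, hv₂, hs₂⟩ := ih₂ ρ hρ
      rw [msubst_pair]
      exact ⟨.pair v₁ v₂, .pair hv₁ hv₂, v₁, v₂, rfl, hs₁, hs₂⟩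
  | @lam Γ σ τ e he ih =>
      intro ρ hρ
      rw [msubst_lam]
      refine ⟨.lam σ (msubst 1 ρ e), .lam, σ, msubst 1 ρ e, rfl, ?_, ?_⟩
      · have hcl : ∀ w ∈ ρ, ClosedUnder 0 w := by
          intro w hw
          obtain ⟨i, hi, rfl⟩ := List.getElem_of_mem hw
          have hlen := hρ.length_eq
          obtain ⟨v', hv', hsem'⟩ := forall₂_getElem hρ
            (List.getElem?_eq_getElem (l := Γ) (i := i) (by omega))
          rw [List.getElem?_eq_getElem (by omega)] at hv'
          cases hv'
          exact semV_closed hsem'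
        have h1 : ClosedUnder (1 + ρ.length) e := by
          have := hasType_closedUnder he
          simp only [List.length_cons] at this
          have hlen := hρ.length_eq
          exact closedUnder_mono this (by omega)
        exact msubst_closedUnder ρ e h1 hcl
      · intro v₁ hs₁
        obtain ⟨v₂, hv₂, hs₂⟩ := ih (v₁ :: ρ) (.cons hs₁ hρ)
        have hcl : ∀ w ∈ ρ, ClosedUnder 0 w := by
          intro w hw
          obtain ⟨i, hi, rfl⟩ := List.getElem_of_mem hw
          have hlen := hρ.length_eq
          obtain ⟨v', hv', hsem'⟩ := forall₂_getElem hρ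
            (List.getElem?_eq_getElem (l := Γ) (i := i) (by omega))
          rw [List.getElem?_eq_getElem (by omega)] at hv'
          cases hv'
          exact semV_closed hsem'
        refine ⟨v₂, ?_, hs₂⟩
        rw [msubst_subst_comm (semV_closed hs₁) ρ e 0 hcl]
        exact hv₂
  | @projl Γ e τ₁ τ₂ _ ih =>
      intro ρ hρ
      obtain ⟨v, hv, v₁, v₂, rfl, hs₁, hs₂⟩ := ih ρ hρ
      rw [msubst_proj]
      exact ⟨v₁, .projl hv, hs₁⟩
  | @projr Γ e τ₁ τ₂ _ ih =>
      intro ρ hρ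
      obtain ⟨v, hv, v₁, v₂, rfl, hs₁, hs₂⟩ := ih ρ hρ
      rw [msubst_proj]
      exact ⟨v₂, .projr hv, hs₂⟩
  | @app Γ e₁ e₂ τ₁ τ₂ _ _ ih₁ ih₂ =>
      intro ρ hρ
      obtain ⟨f, hf, σ, b, rfl, hb, hfun⟩ := ih₁ ρ hρ
      obtain ⟨a, ha, hsa⟩ := ih₂ ρ hρ
      obtain ⟨v₂, hv₂, hs₂⟩ := hfun a hsa
      rw [msubst_app]
      exact ⟨v₂, .app hf ha hv₂, hs₂⟩

/-- Weak normalization for closed well-typed terms. -/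
theorem normalization {e : Exp} {τ : Ty} (ht : HasType [] e τ) : ∃ v, Eval e v := by
  obtain ⟨v, hv, _⟩ := fundamental ht [] .nil
  exact ⟨v, hv⟩

theorem eval_self {e v : Exp} (h : Eval e v) : Eval v v := by
  induction h with
  | const => exact .const
  | lam => exact .lam
  | pair _ _ ih₁ ih₂ => exact .pair ih₁ ih₂
  | projl _ ih => cases ih with | pair h₁ h₂ => exact h₁
  | projr _ ih => cases ih with | pair h₁ h₂ => exact h₂
  | app _ _ _ _ _ ih₃ => exact ih₃

theorem eval_det {e v : Exp} (h : Eval e v) : ∀ {v'}, Eval e v' → v = v' := by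
  induction h with
  | const => intro v' h'; cases h'; rfl
  | lam => intro v' h'; cases h'; rfl
  | pair _ _ ih₁ ih₂ =>
      intro v' h'; cases h' with
      | pair h₁ h₂ => rw [ih₁ h₁, ih₂ h₂]
  | projl _ ih =>
      intro v' h'; cases h' with
      | projl h₁ => exact (Exp.pair.inj (ih h₁)).1
  | projr _ ih =>
      intro v' h'; cases h' with
      | projr h₁ => exact (Exp.pair.inj (ih h₁)).2
  | app _ _ _ ih₁ ih₂ ih₃ =>
      intro v' h'; cases h' with
      | app h₁ h₂ h₃ =>
          have := ih₁ h₁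
          injection this with hσ hb
          subst hσ; subst hb
          have := ih₂ h₂
          subst this
          exact ih₃ h₃

theorem hasType_weaken {Γ : List Ty} {e : Exp} {τ : Ty} (h : HasType Γ e τ) :
    ∀ Δ : List Ty, HasType (Γ ++ Δ) e τ := by
  induction h with
  | var h =>
      intro Δ
      refine .var ?_
      rw [List.getElem?_append_left (List.getElem?_eq_some_iff.mp h).1]
      exact h
  | const => intro Δ; exact .const
  | pair _ _ ih₁ ih₂ => intro Δ; exact .pair (ih₁ Δ) (ih₂ Δ)
  | lam _ ih => intro Δ; exact .lam (ih Δ)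
  | projl _ ih => intro Δ; exact .projl (ih Δ)
  | projr _ ih => intro Δ; exact .projr (ih Δ)
  | app _ _ ih₁ ih₂ => intro Δ; exact .app (ih₁ Δ) (ih₂ Δ)
/-- if Q is α-constructible using M and P ▷ Q ⊢ v : σ ⇝ Valid for
a 0-order type σ, then v is σ-constructible using M. -/
theorem cond_constructible (M : Module) (P Q : Exp → Prop) (σ : Ty) (v : Exp)
    (hσ : σ.IsZero) (hQ : ConstructiblePred M Q)
    (h : Cond M.τc σ P Q v) :
    Constructible M v σ := by
  induction hσ generalizing v with
  | base =>
      simp only [Cond] at h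
      obtain ⟨w, rfl⟩ := h
      obtain ⟨v', hv'⟩ := normalization M.wt
      exact ⟨.lam M.τm (.const w), .lam .const, .app .lam hv' .const⟩
  | abs =>
      simp only [Cond] at h
      exact hQ v h.2
  | @prod σ₁ σ₂ hσ₁ hσ₂ ih₁ ih₂ =>
      simp only [Cond] at h
      obtain ⟨v₁, v₂, rfl, h₁, h₂⟩ := h
      obtain ⟨f₁, hf₁t, hf₁e⟩ := ih₁ _ h₁
      obtain ⟨f₂, hf₂t, hf₂e⟩ := ih₂ _ h₂
      cases hf₁e with
      | @app _ _ b₁ w₁ _ σ₁' hE₁ hvm₁ hb₁ =>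
        cases hf₂e with
        | @app _ _ b₂ w₂ _ σ₂' hE₂ hvm₂ hb₂ =>
          have hw : w₂ = w₁ := eval_det hvm₂ hvm₁
          subst hw
          refine ⟨.lam M.τm (.pair (.app f₁ (.var 0)) (.app f₂ (.var 0))), ?_, ?_⟩
          · exact .lam (.pair
              (.app (hasType_weaken hf₁t [M.τm]) (.var rfl))
              (.app (hasType_weaken hf₂t [M.τm]) (.var rfl)))
          · refine Eval.app .lam hvm₁ ?_
            have hbody : (Exp.pair (.app f₁ (.var 0)) (.app f₂ (.var 0))).subst 0 w₂
                = Exp.pair (.app f₁ w₂) (.app f₂ w₂) := by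
              simp only [Exp.subst,
                subst_of_closed (hasType_closedUnder hf₁t) (Nat.zero_le 0),
                subst_of_closed (hasType_closedUnder hf₂t) (Nat.zero_le 0)]
              simp
            rw [hbody]
            exact .pair (.app hE₁ (eval_self hvm₁) hb₁) (.app hE₂ (eval_self hvm₁) hb₂)

end RepInv
end

section
/- If P ▷ Q ⊢ v : τ ⇝ (S, V), then (i) every x ∈ S satisfies P x, (ii) V is nonempty, and (iii) every x ∈ V satisfies ¬ Q x. -/
/-!  Formalization of the core calculus and definitions from
"Data-Driven Inference of Representation Invariants". -/

namespace RepInv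

lemma collect_pred (τc : Ty) (P Q : Exp → Prop) :
    ∀ {σ v S}, CollectV τc σ v S → Cond τc σ Q P v → ∀ x ∈ S, P x := by
  intro σ v S h
  induction h with
  | base => intro _ x hx; exact absurd hx (Set.notMem_empty x)
  | abs ht => intro hc x hx; rw [Set.mem_singleton_iff] at hx; subst hx; exact hc.2
  | prod h1 h2 ih1 ih2 =>
    rintro ⟨w₁, w₂, heq, hc1, hc2⟩ x hx
    cases heq
    rcases hx with hx | hx
    · exact ih1 hc1 x hx
    · exact ih2 hc2 x hx

/-- if P ▷ Q ⊢ v : τ ⇝ (S, V) then (i) every x ∈ S satisfies P x,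
(ii) V is nonempty, and (iii) every x ∈ V satisfies ¬ Q x. -/
theorem refute_counterexample (τc τ : Ty) (P Q : Exp → Prop) (v : Exp)
    (S V : Set Exp) (hτ : τ.IsFirst) (h : Refute τc P Q v τ S V) :
    (∀ x ∈ S, P x) ∧ V.Nonempty ∧ (∀ x ∈ V, ¬ Q x) := by
  clear hτ
  induction h with
  | abs ht hq =>
    exact ⟨fun x hx => absurd hx (Set.notMem_empty x), ⟨_, rfl⟩,
      fun x hx => by rw [Set.mem_singleton_iff] at hx; subst hx; exact hq⟩
  | prodl _ _ ih => exact ih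
  | prodr _ _ ih => exact ih
  | fn ht hc hev hr hcoll ih =>
    refine ⟨?_, ih.2.1, ih.2.2⟩
    intro x hx
    rcases hx with hx | hx
    · exact collect_pred τc P Q hcoll hc x hx
    · exact ih.1 x hx


end RepInv
end

section
/- If v is τ-constructible using M, the predicate P is α-constructible using M, and P ▷ Q ⊢ v : τ ⇝ (S, V), then every element of V is α-constructible using M. -/
/-!  Formalization of the core calculus and definitions from
"Data-Driven Inference of Representation Invariants". -/

namespace RepInv

/-! Auxiliary lemmas for STATEMENT 8. -/

lemma evalValue {e v : Exp} (h : Eval e v) : v.IsValue := by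
  induction h with
  | const => exact .const
  | lam => exact .lam
  | pair _ _ ih₁ ih₂ => exact .pair ih₁ ih₂
  | projl _ ih => cases ih; assumption
  | projr _ ih => cases ih; assumption
  | app _ _ _ _ _ ih => exact ih

lemma valueEvalSelf {v : Exp} (h : v.IsValue) : Eval v v := by
  induction h with
  | const => exact .const
  | lam => exact .lam
  | pair _ _ ih₁ ih₂ => exact .pair ih₁ ih₂

lemma evalDet {e v v' : Exp} (h : Eval e v) (h' : Eval e v') : v = v' := by
  induction h generalizing v' with
  | const => cases h'; rfl
  | lam => cases h'; rfl
  | pair _ _ ih₁ ih₂ => cases h' with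
    | pair h₁ h₂ => rw [ih₁ h₁, ih₂ h₂]
  | projl _ ih => cases h' with
    | projl h₁ => injection ih h₁
  | projr _ ih => cases h' with
    | projr h₁ => injection ih h₁
  | app _ _ _ ih₁ ih₂ ih₃ => cases h' with
    | app g₁ g₂ g₃ =>
      have h1 := ih₁ g₁
      injection h1 with hσ he
      subst hσ; subst he
      rw [← ih₂ g₂] at g₃
      exact ih₃ g₃

lemma valueEvalEq {v w : Exp} (hv : v.IsValue) (h : Eval v w) : w = v :=
  (evalDet h (valueEvalSelf hv))

lemma substClosed {Γ : List Ty} {e : Exp} {τ : Ty} (h : HasType Γ e τ) :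
    ∀ k s, Γ.length ≤ k → e.subst k s = e := by
  induction h with
  | var hn =>
    intro k s hk
    rename_i Γ n τ
    have hlt : n < Γ.length := by
      by_contra hge
      simp [List.getElem?_eq_none (Nat.le_of_not_lt hge)] at hn
    have h1 : n ≠ k := Nat.ne_of_lt (Nat.lt_of_lt_of_le hlt hk)
    have h2 : ¬ k < n := Nat.not_lt.mpr (Nat.le_of_lt (Nat.lt_of_lt_of_le hlt hk))
    simp [Exp.subst, h1, h2]
  | const => intro k s _; rfl
  | pair _ _ ih₁ ih₂ =>
    intro k s hk; simp [Exp.subst, ih₁ k s hk, ih₂ k s hk]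
  | lam _ ih =>
    intro k s hk
    simp [Exp.subst, ih (k+1) s (by simpa using Nat.succ_le_succ hk)]
  | projl _ ih => intro k s hk; simp [Exp.subst, ih k s hk]
  | projr _ ih => intro k s hk; simp [Exp.subst, ih k s hk]
  | app _ _ ih₁ ih₂ =>
    intro k s hk; simp [Exp.subst, ih₁ k s hk, ih₂ k s hk]

lemma weaken {Γ : List Ty} {e : Exp} {τ : Ty} (h : HasType Γ e τ) (Δ : List Ty) :
    HasType (Γ ++ Δ) e τ := by
  induction h generalizing Δ with
  | var hn =>
    rename_i Γ n τ
    refine HasType.var ?_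
    have hlt : n < Γ.length := by
      by_contra hge
      simp [List.getElem?_eq_none (Nat.le_of_not_lt hge)] at hn
    rw [List.getElem?_append, if_pos hlt]; exact hn
  | const => exact .const
  | pair _ _ ih₁ ih₂ => exact .pair (ih₁ Δ) (ih₂ Δ)
  | lam _ ih => exact .lam (ih Δ)
  | projl _ ih => exact .projl (ih Δ)
  | projr _ ih => exact .projr (ih Δ)
  | app _ _ ih₁ ih₂ => exact .app (ih₁ Δ) (ih₂ Δ)

/-- From a constructible pair, both components are constructible. -/
lemma pairConstructibleL {M : Module} {v₁ v₂ : Exp} {τ₁ τ₂ : Ty}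
    (h : Constructible M (.pair v₁ v₂) (.prod τ₁ τ₂)) : Constructible M v₁ τ₁ := by
  obtain ⟨f, hty, hev⟩ := h
  cases hev with
  | app hf hvm hstep =>
    rename_i e u σ
    refine ⟨.lam M.τm (.proj false (.app f (.var 0))), ?_, ?_⟩
    · exact .lam (.projl (.app (weaken hty [M.τm]) (.var rfl)))
    · refine Eval.app .lam hvm ?_
      have hfc : f.subst 0 u = f := substClosed hty 0 u (by simp)
      show Eval ((Exp.proj false (.app f (.var 0))).subst 0 u) v₁
      simp only [Exp.subst, hfc]
      exact Eval.projl (Eval.app hf (valueEvalSelf (evalValue hvm)) hstep)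

lemma pairConstructibleR {M : Module} {v₁ v₂ : Exp} {τ₁ τ₂ : Ty}
    (h : Constructible M (.pair v₁ v₂) (.prod τ₁ τ₂)) : Constructible M v₂ τ₂ := by
  obtain ⟨f, hty, hev⟩ := h
  cases hev with
  | app hf hvm hstep =>
    rename_i e u σ
    refine ⟨.lam M.τm (.proj true (.app f (.var 0))), ?_, ?_⟩
    · exact .lam (.projr (.app (weaken hty [M.τm]) (.var rfl)))
    · refine Eval.app .lam hvm ?_
      have hfc : f.subst 0 u = f := substClosed hty 0 u (by simp)
      show Eval ((Exp.proj true (.app f (.var 0))).subst 0 u) v₂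
      simp only [Exp.subst, hfc]
      exact Eval.projr (Eval.app hf (valueEvalSelf (evalValue hvm)) hstep)

/-- Pairing two constructibles. -/
lemma pairConstructible {M : Module} {v₁ v₂ : Exp} {τ₁ τ₂ : Ty}
    (h₁ : Constructible M v₁ τ₁) (h₂ : Constructible M v₂ τ₂) :
    Constructible M (.pair v₁ v₂) (.prod τ₁ τ₂) := by
  obtain ⟨f₁, hty₁, hev₁⟩ := h₁
  obtain ⟨f₂, hty₂, hev₂⟩ := h₂
  cases hev₁ with
  | app hf₁ hvm₁ hstep₁ =>
    rename_i e₁ u σ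
    cases hev₂ with
    | app hf₂ hvm₂ hstep₂ =>
      rename_i e₂ u' σ'
      have heq : u = u' := evalDet hvm₁ hvm₂
      rw [← heq] at hstep₂
      refine ⟨.lam M.τm (.pair (.app f₁ (.var 0)) (.app f₂ (.var 0))), ?_, ?_⟩
      · exact .lam (.pair (.app (weaken hty₁ [M.τm]) (.var rfl))
          (.app (weaken hty₂ [M.τm]) (.var rfl)))
      · refine Eval.app .lam hvm₁ ?_
        have hc₁ : f₁.subst 0 u = f₁ := substClosed hty₁ 0 u (by simp)
        have hc₂ : f₂.subst 0 u = f₂ := substClosed hty₂ 0 u (by simp)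
        show Eval ((Exp.pair (.app f₁ (.var 0)) (.app f₂ (.var 0))).subst 0 u)
          (.pair v₁ v₂)
        simp only [Exp.subst, hc₁, hc₂]
        have huv := valueEvalSelf (evalValue hvm₁)
        exact Eval.pair (Eval.app hf₁ huv hstep₁) (Eval.app hf₂ huv hstep₂)

/-- Application of constructibles is constructible. -/
lemma appConstructible {M : Module} {v v₁ v₂ : Exp} {σ₁ τ₂ : Ty}
    (h : Constructible M v (.arrow σ₁ τ₂)) (h₁ : Constructible M v₁ σ₁)
    (hev : Eval (.app v v₁) v₂) : Constructible M v₂ τ₂ := by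
  obtain ⟨f, hty, hevf⟩ := h
  obtain ⟨f₁, hty₁, hevf₁⟩ := h₁
  cases hevf with
  | app hf hvm hstep =>
    rename_i e u σ
    cases hevf₁ with
    | app hf₁ hvm₁ hstep₁ =>
      rename_i e' u' σ'
      have heq : u = u' := evalDet hvm hvm₁
      rw [← heq] at hstep₁
      cases hev with
      | app hvl harg hbody =>
        rename_i e'' u₁ σ''
        have hvval : Exp.IsValue v := evalValue hstep
        have hveq := valueEvalEq hvval hvl
        have hv₁val : Exp.IsValue v₁ := evalValue hstep₁
        have hu₁ : u₁ = v₁ := valueEvalEq hv₁val harg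
        subst hu₁
        refine ⟨.lam M.τm (.app (.app f (.var 0)) (.app f₁ (.var 0))), ?_, ?_⟩
        · exact .lam (.app (.app (weaken hty [M.τm]) (.var rfl))
            (.app (weaken hty₁ [M.τm]) (.var rfl)))
        · refine Eval.app .lam hvm ?_
          have hc : f.subst 0 u = f := substClosed hty 0 u (by simp)
          have hc₁ : f₁.subst 0 u = f₁ := substClosed hty₁ 0 u (by simp)
          show Eval ((Exp.app (.app f (.var 0)) (.app f₁ (.var 0))).subst 0 u) v₂
          simp only [Exp.subst, hc, hc₁, reduceIte]
          have huv := valueEvalSelf (evalValue hvm)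
          refine Eval.app (σ := σ'') ?_ (Eval.app hf₁ huv hstep₁) hbody
          rw [hveq]
          exact Eval.app hf huv hstep

/-- Values satisfying a zero-order `Cond` with constructible inner predicate
are constructible. -/
lemma condConstructible {M : Module} {P Q : Exp → Prop} {σ : Ty} {v u : Exp}
    (hσ : σ.IsZero) (hP : ConstructiblePred M P) (hu : Eval M.vm u)
    (hc : Cond M.τc σ Q P v) : Constructible M v σ := by
  induction hσ generalizing v with
  | base =>
    obtain ⟨w, rfl⟩ := hc
    refine ⟨.lam M.τm (.const w), .lam .const, Eval.app .lam hu ?_⟩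
    exact Eval.const
  | abs => exact hP v hc.2
  | prod h₁ h₂ ih₁ ih₂ =>
    obtain ⟨v₁, v₂, rfl, hc₁, hc₂⟩ := hc
    exact pairConstructible (ih₁ hc₁) (ih₂ hc₂)

/-- if v is τ-constructible using M, P is α-constructible using M,
and P ▷ Q ⊢ v : τ ⇝ (S, V), then every element of V is α-constructible using M. -/
theorem refute_constructible (M : Module) (P Q : Exp → Prop) (τ : Ty) (v : Exp)
    (S V : Set Exp) (hτ : τ.IsFirst)
    (hv : Constructible M v τ) (hP : ConstructiblePred M P)
    (h : Refute M.τc P Q v τ S V) :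
    ∀ x ∈ V, Constructible M x .abs := by
  revert hτ hv
  induction h with
  | abs h1 h2 =>
    intro hτ hv x hx
    rw [Set.mem_singleton_iff] at hx
    subst hx
    exact hv
  | prodl hr ht2 ih =>
    intro hτ hv
    cases hτ with
    | zero hz => cases hz with | prod a b => exact ih (.zero a) (pairConstructibleL hv)
    | prod a b => exact ih a (pairConstructibleL hv)
  | prodr ht1 hr ih =>
    intro hτ hv
    cases hτ with
    | zero hz => cases hz with | prod a b => exact ih (.zero b) (pairConstructibleR hv)
    | prod a b => exact ih b (pairConstructibleR hv)
  | fn hty hcond hev hr hcol ih =>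
    intro hτ hv
    have hστ : _ := hτ
    cases hτ with
    | zero hz => cases hz
    | arrow hσ hτ₂ =>
    obtain ⟨f, htyf, hevf⟩ := hv
    cases hevf with
    | app hf hvm hstep =>
      have h₁ := condConstructible hσ hP hvm hcond
      exact ih hτ₂ (appConstructible ⟨f, htyf, Eval.app hf hvm hstep⟩ h₁ hev)

end RepInv
end

section
/- If P ▷ Q ⊢ v : τ ⇝ Valid and Q ▷ Q ⊢ v : τ ⇝ (S, V), then there exists x ∈ S with ¬ P x. -/
/-!  Formalization of the core calculus and definitions from
"Data-Driven Inference of Representation Invariants". -/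

namespace RepInv

lemma isFirst_prod_inv {τ₁ τ₂ : Ty} (h : Ty.IsFirst (.prod τ₁ τ₂)) :
    τ₁.IsFirst ∧ τ₂.IsFirst := by
  cases h with
  | zero h => cases h with | prod h₁ h₂ => exact ⟨.zero h₁, .zero h₂⟩
  | prod h₁ h₂ => exact ⟨h₁, h₂⟩

lemma isFirst_arrow_inv {σ₁ τ₂ : Ty} (h : Ty.IsFirst (.arrow σ₁ τ₂)) :
    τ₂.IsFirst := by
  cases h with
  | zero h => cases h
  | arrow _ h₂ => exact h₂

/-- Strengthening over collected α-components: if all collected values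
satisfy `P`, then `Cond` with second predicate `Q` implies `Cond` with `P`. -/
lemma cond_of_collect {τc σ : Ty} {v : Exp} {S : Set Exp}
    (hc : CollectV τc σ v S) (A Q P : Exp → Prop)
    (hP : ∀ x ∈ S, P x) (h : Cond τc σ A Q v) : Cond τc σ A P v := by
  induction hc with
  | base => exact h
  | abs ht => exact ⟨ht, hP _ rfl⟩
  | @prod σ₁ σ₂ v₁ v₂ S₁ S₂ h₁ h₂ ih₁ ih₂ =>
    obtain ⟨w₁, w₂, heq, hc₁, hc₂⟩ := h
    cases heq
    exact ⟨v₁, v₂, rfl,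
      ih₁ (fun x hx => hP x (Or.inl hx)) hc₁,
      ih₂ (fun x hx => hP x (Or.inr hx)) hc₂⟩

/-- if P ▷ Q ⊢ v : τ ⇝ Valid and Q ▷ Q ⊢ v : τ ⇝ (S, V), then
there exists x ∈ S with ¬ P x. -/
theorem refute_of_cond_valid (τc τ : Ty) (P Q : Exp → Prop) (v : Exp)
    (S V : Set Exp) (hτ : τ.IsFirst)
    (hvalid : Cond τc τ P Q v) (href : Refute τc Q Q v τ S V) :
    ∃ x ∈ S, ¬ P x := by
  induction href with
  | abs ht hq => exact absurd hvalid.2 hq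
  | @prodl v₁ v₂ τ₁ τ₂ S V hr _ ih =>
    obtain ⟨w₁, w₂, heq, hc₁, _⟩ := hvalid
    cases heq
    exact ih (isFirst_prod_inv hτ).1 hc₁
  | @prodr v₁ v₂ τ₁ τ₂ S V _ hr ih =>
    obtain ⟨w₁, w₂, heq, _, hc₂⟩ := hvalid
    cases heq
    exact ih (isFirst_prod_inv hτ).2 hc₂
  | @fn v v₁ v₂ σ₁ τ₂ S V S₁ ht hc₁ hev hr hcol ih =>
    by_cases hall : ∀ x ∈ S₁, P x
    · have hc₁' : Cond τc σ₁ Q P v₁ := cond_of_collect hcol Q Q P hall hc₁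
      obtain ⟨x, hx, hnp⟩ := ih (isFirst_arrow_inv hτ) (hvalid.2 v₁ v₂ hc₁' hev)
      exact ⟨x, Or.inr hx, hnp⟩
    · push_neg at hall
      obtain ⟨x, hx, hnp⟩ := hall
      exact ⟨x, Or.inl hx, hnp⟩

end RepInv
end

section
/- If Verify is sound and NoNegatives I = Valid, then I is a sufficient representation invariant for module M with respect to specification φ (i.e., I is sufficient for φ and M, and I ▷ I ⊢ vm : τm ⇝ Valid). -/
/-!  Formalization of the core calculus and definitions from
"Data-Driven Inference of Representation Invariants". -/

namespace RepInv

/-- if Verify is sound and NoNegatives I = Valid, then I is a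
sufficient representation invariant for M with respect to φ. -/
theorem noNegatives_valid_sound (M : Module) (φ : Exp → Prop)
    (Vf : (Exp → Prop) → VResult) (CI : (Exp → Prop) → (Exp → Prop) → CIResult)
    (hVs : VerifySound M Vf) (hCI : CICorrect M CI)
    (I : Exp → Prop)
    (h : NoNegatives φ Vf CI I = .valid) :
    SuffRepInv M φ I := by
  unfold NoNegatives at h
  rcases hv : Vf (fun v => I v → φ v) with _ | v
  · simp only [hv] at h
    rcases hci : CI I I with _ | ⟨S, V⟩
    · exact ⟨fun v hvt hI => hVs _ hv v hvt hI, (hCI I I).1 hci⟩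
    · simp only [hci] at h; exact absurd h (by simp)
  · simp only [hv] at h; exact absurd h (by simp)

end RepInv
end

section
/- Suppose Verify is sound and complete. Then: (1) if NoNegatives I = CounterExample S, then either (S ≠ ∅ and every v ∈ S satisfies I v and ¬ φ[τc] vm v), or (every v ∈ S satisfies I v and there exists a set V with I ▷ I ⊢ vm : τm ⇝ (S, V)); and (2) if NoNegatives I = Valid, then I ▷ I ⊢ vm : τm ⇝ Valid. -/
/-!  Formalization of the core calculus and definitions from
"Data-Driven Inference of Representation Invariants". -/

namespace RepInv

lemma collectV_mem_of_cond {τc σ : Ty} {Q : Exp → Prop} {v : Exp} {S : Set Exp}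
    (hC : CollectV τc σ v S) (hcond : Cond τc σ Q Q v) : ∀ x ∈ S, Q x := by
  induction hC with
  | base => simp
  | abs h => intro x hx; simp at hx; subst hx; exact hcond.2
  | prod h1 h2 ih1 ih2 =>
    obtain ⟨w₁, w₂, heq, hc1, hc2⟩ := hcond
    cases heq
    intro x hx
    rcases hx with hx | hx
    · exact ih1 hc1 x hx
    · exact ih2 hc2 x hx

lemma refute_mem_I {τc τ : Ty} {I : Exp → Prop} {v : Exp} {S V : Set Exp}
    (h : Refute τc I I v τ S V) : ∀ x ∈ S, I x := by
  induction h with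
  | abs _ _ => simp
  | prodl _ _ ih => exact ih
  | prodr _ _ ih => exact ih
  | fn _ hcond _ _ hcoll ih =>
    intro x hx
    rcases hx with hx | hx
    · exact collectV_mem_of_cond hcoll hcond x hx
    · exact ih x hx

/-- soundness and completeness of NoNegatives, assuming Verify
is sound and complete. -/
theorem noNegatives_sound_and_complete (M : Module) (φ : Exp → Prop)
    (Vf : (Exp → Prop) → VResult) (CI : (Exp → Prop) → (Exp → Prop) → CIResult)
    (hVs : VerifySound M Vf) (hVc : VerifyComplete M Vf) (hCI : CICorrect M CI)
    (I : Exp → Prop) :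
    (∀ S : Set Exp, NoNegatives φ Vf CI I = .cex S →
      (S.Nonempty ∧ ∀ v ∈ S, I v ∧ ¬ φ v) ∨
      ((∀ v ∈ S, I v) ∧ ∃ V : Set Exp, Refute M.τc I I M.vm M.τm S V)) ∧
    (NoNegatives φ Vf CI I = .valid → Cond M.τc M.τm I I M.vm) := by
  constructor
  · intro S hS
    unfold NoNegatives at hS
    rcases hVf : Vf (fun v => I v → φ v) with _ | v
    · rw [hVf] at hS
      rcases hCIr : CI I I with _ | ⟨S', V'⟩
      · rw [hCIr] at hS; cases hS
      · rw [hCIr] at hS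
        cases hS
        have hRef := (hCI I I).2 S V' hCIr
        exact Or.inr ⟨refute_mem_I hRef, V', hRef⟩
    · rw [hVf] at hS
      cases hS
      obtain ⟨_, hnI⟩ := hVc _ v hVf
      left
      refine ⟨⟨v, rfl⟩, ?_⟩
      intro x hx
      simp at hx; subst hx
      push_neg at hnI
      exact hnI
  · intro hval
    unfold NoNegatives at hval
    rcases hVf : Vf (fun v => I v → φ v) with _ | v
    · rw [hVf] at hval
      rcases hCIr : CI I I with _ | ⟨S', V'⟩
      · exact (hCI I I).1 hCIr
      · rw [hCIr] at hval; cases hval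
    · rw [hVf] at hval; cases hval

end RepInv
end

section
/- If Verify is sound, then Hanoi ∅ ∅ is sound: whenever the Hanoi algorithm, invoked with empty positive and negative example sets, returns a predicate I, that I is a sufficient representation invariant for module M with respect to specification φ. -/
/-!  Formalization of the core calculus and definitions from
"Data-Driven Inference of Representation Invariants". -/

namespace RepInv

/-- if Verify is sound, then Hanoi ∅ ∅ is sound: whenever the
algorithm started from empty example sets returns a predicate I, that I is a
sufficient representation invariant for M with respect to φ. -/
theorem hanoi_sound (M : Module) (φ : Exp → Prop)
    (Vf : (Exp → Prop) → VResult) (Sy : Set Exp → Set Exp → Option (Exp → Prop)) (CI : (Exp → Prop) → (Exp → Prop) → CIResult)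
    (hVs : VerifySound M Vf) (hCI : CICorrect M CI)
    (I : Exp → Prop)
    (h : HanoiRun φ Vf Sy CI ∅ ∅ (.invariant I)) :
    SuffRepInv M φ I := by
  suffices h' : ∀ Vp Vm r, HanoiRun φ Vf Sy CI Vp Vm r →
      ∀ J : Exp → Prop, r = .invariant J → SuffRepInv M φ J by
    exact h' _ _ _ h I rfl
  intro Vp Vm r hr
  induction hr with
  | synthFail _ => intro J hJ; cases hJ
  | weaken _ _ _ ih => exact ih
  | specCex _ _ _ _ => intro J hJ; cases hJ
  | strengthen _ _ _ _ _ ih => exact ih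
  | @done Vp Vm I0 hSy hCP hNN =>
    intro J hJ
    cases hJ
    unfold NoNegatives at hNN
    cases hv : Vf (fun v => I0 v → φ v) with
    | valid =>
      simp only [hv] at hNN
      cases hci : CI I0 I0 with
      | valid => exact ⟨fun v hvt hI => hVs _ hv v hvt hI, (hCI I0 I0).1 hci⟩
      | cex S V => simp only [hci] at hNN; cases hNN
    | cex v => simp only [hv] at hNN; cases hNN


end RepInv
end
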